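/- arXiv:1712.05361 — 2 statements merged into one kernel-verified Lean document; each statement's English description precedes it below -/
import Mathlib

section
/- Let F be a finite field and let α, β ∈ F⟦X⟧ be power series expansions of rational functions, i.e., suppose there exist polynomials h, p, h', p' ∈ F[X] with h(0) ≠ 0, h'(0) ≠ 0, h·α = p and h'·β = p' in F⟦X⟧, and suppose additionally that α has nonzero constant term. Then the tree automorphism AffMap(α, β) ∈ Aut(T_F) is finite-state. -/
namespace RoverNekrashevych

/-- The state (section) of `f` at the word `u`. -/
def state {X : Type*} (f : List X → List X) (u : List X) : List X → List X :=
  fun w => (f (u ++ w)).drop u.length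

/-- A function on words is finite-state if it has only finitely many states. -/
def FiniteStateFun {X : Type*} (f : List X → List X) : Prop :=
  Set.Finite {g : List X → List X | ∃ u : List X, g = state f u}

/-- The truncated power series `Σ_{i < length w} w_i X^i` determined by a word. -/
noncomputable def wordToSeries {F : Type*} [CommSemiring F] (w : List F) : PowerSeries F :=
  PowerSeries.mk fun i => w.getD i 0

/-- The affine map `AffMap (α, β)` on words: it sends `(c_0, …, c_{e-1})` to the word of
the first `e` coefficients of `α · (Σ_{i<e} c_i X^i) + β`. -/
noncomputable def affWord {F : Type*} [CommSemiring F] (α β : PowerSeries F) (w : List F) :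
    List F :=
  List.ofFn fun i : Fin w.length => PowerSeries.coeff i (α * wordToSeries w + β)


open PowerSeries

/-- shift by e: drop the first e coefficients -/
noncomputable def shiftS {F : Type*} [CommSemiring F] (e : ℕ) (γ : PowerSeries F) :
    PowerSeries F := PowerSeries.mk fun n => PowerSeries.coeff (e + n) γ

@[simp] lemma coeff_shiftS {F : Type*} [CommSemiring F] (e n : ℕ) (γ : PowerSeries F) :
    PowerSeries.coeff n (shiftS e γ) = PowerSeries.coeff (e + n) γ := by
  simp [shiftS]

lemma coeff_wordToSeries_of_le {F : Type*} [CommSemiring F] (w : List F) {n : ℕ}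
    (hn : w.length ≤ n) : PowerSeries.coeff n (wordToSeries w) = 0 := by
  simp [wordToSeries, List.getD, List.getElem?_eq_none (by omega : w.length ≤ n)]

lemma wordToSeries_append {F : Type*} [CommSemiring F] (u w : List F) :
    wordToSeries (u ++ w) = wordToSeries u + X ^ u.length * wordToSeries w := by
  ext n
  rw [map_add, coeff_X_pow_mul']
  simp only [wordToSeries, coeff_mk]
  by_cases hn : n < u.length
  · rw [if_neg (by omega), List.getD_append _ _ _ _ hn, add_zero]
  · push_neg at hn
    rw [if_pos hn, List.getD_eq_default _ _ hn, zero_add,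
      List.getD_append_right _ _ _ _ hn]

lemma state_affWord {F : Type*} [CommRing F] (α β : PowerSeries F) (u : List F) :
    state (affWord α β) u = affWord α (shiftS u.length (α * wordToSeries u + β)) := by
  funext w
  apply List.ext_getElem
  · simp [state, affWord]
  intro n h1 h2
  simp only [state, affWord, List.getElem_drop, List.getElem_ofFn]
  rw [wordToSeries_append, mul_add, ← mul_assoc,
    show α * X ^ u.length * wordToSeries w = X ^ u.length * (α * wordToSeries w) by ring]
  simp only [map_add, coeff_shiftS]
  rw [add_comm u.length n, coeff_X_pow_mul]
  ring

open Finset in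
/-- For `n ≥ natDegree Q`, the `n`-th coefficient of `Q * shiftS e γ` is the
`(e+n)`-th coefficient of `Q * γ`. -/
lemma coeff_poly_mul_shiftS {F : Type*} [CommRing F] (Q : Polynomial F) (e : ℕ)
    (γ : PowerSeries F) {n : ℕ} (hn : Q.natDegree ≤ n) :
    PowerSeries.coeff n ((Q : PowerSeries F) * shiftS e γ) =
      PowerSeries.coeff (e + n) ((Q : PowerSeries F) * γ) := by
  rw [PowerSeries.coeff_mul, PowerSeries.coeff_mul,
    Finset.Nat.sum_antidiagonal_eq_sum_range_succ_mk,
    Finset.Nat.sum_antidiagonal_eq_sum_range_succ_mk]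
  calc ∑ i ∈ Finset.range (n + 1),
        PowerSeries.coeff i (Q : PowerSeries F) * PowerSeries.coeff (n - i) (shiftS e γ)
      = ∑ i ∈ Finset.range (n + 1),
        PowerSeries.coeff i (Q : PowerSeries F) * PowerSeries.coeff (e + n - i) γ := by
        apply Finset.sum_congr rfl
        intro i hi
        rw [Finset.mem_range] at hi
        rw [coeff_shiftS, show e + (n - i) = e + n - i by omega]
    _ = ∑ i ∈ Finset.range (e + n + 1),
        PowerSeries.coeff i (Q : PowerSeries F) * PowerSeries.coeff (e + n - i) γ := by
        apply Finset.sum_subset (Finset.range_subset_range.2 (by omega : n + 1 ≤ e + n + 1))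
        intro i _ hi
        rw [Finset.mem_range, not_lt] at hi
        rw [Polynomial.coeff_coe, Polynomial.coeff_eq_zero_of_natDegree_lt (by omega),
          zero_mul]

open Finset in
lemma coeff_poly_mul_word_eq_zero {F : Type*} [CommRing F] (A : Polynomial F) (u : List F)
    {m : ℕ} (hm : A.natDegree + u.length ≤ m) :
    PowerSeries.coeff m ((A : PowerSeries F) * wordToSeries u) = 0 := by
  rw [PowerSeries.coeff_mul]
  apply Finset.sum_eq_zero
  rintro ⟨i, j⟩ hij
  rw [Finset.HasAntidiagonal.mem_antidiagonal] at hij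
  by_cases hi : i ≤ A.natDegree
  · rw [coeff_wordToSeries_of_le u (by omega), mul_zero]
  · rw [Polynomial.coeff_coe, Polynomial.coeff_eq_zero_of_natDegree_lt (by omega), zero_mul]

lemma finite_tailZero (F : Type*) [Field F] [Fintype F] (D : ℕ) :
    {δ : PowerSeries F | ∀ n, D < n → PowerSeries.coeff n δ = 0}.Finite := by
  rw [Set.finite_coe_iff.symm]
  apply Finite.of_injective
    (fun δ : {δ : PowerSeries F | ∀ n, D < n → PowerSeries.coeff n δ = 0} =>
      fun i : Fin (D + 1) => PowerSeries.coeff i δ.1)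
  rintro ⟨δ₁, h₁⟩ ⟨δ₂, h₂⟩ hδ
  ext n : 3
  by_cases hn : n ≤ D
  · simpa using congrFun hδ ⟨n, by omega⟩
  · rw [h₁ n (by omega), h₂ n (by omega)]

theorem affMap_finiteState_of_rational_aux {F : Type*} [Field F] [Fintype F]
    (α β : PowerSeries F) (hα0 : PowerSeries.constantCoeff α ≠ 0)
    (h p h' p' : Polynomial F) (hh : h.eval 0 ≠ 0) (hh' : h'.eval 0 ≠ 0)
    (hαrat : (h : PowerSeries F) * α = (p : PowerSeries F))
    (hβrat : (h' : PowerSeries F) * β = (p' : PowerSeries F)) :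
    Set.Finite {g : List F → List F | ∃ u : List F, g = state (affWord α β) u} := by
  set Q : Polynomial F := h * h' with hQ
  set C : ℕ := max (h'.natDegree + p.natDegree) (h.natDegree + p'.natDegree) with hC
  set D : ℕ := max Q.natDegree C with hD
  have hQ0 : (Q : PowerSeries F) ≠ 0 := by
    intro hc
    apply hh
    have := congrArg (PowerSeries.constantCoeff) hc
    rw [Polynomial.constantCoeff_coe, hQ, Polynomial.mul_coeff_zero, map_zero,
      Polynomial.coeff_zero_eq_eval_zero, Polynomial.coeff_zero_eq_eval_zero] at this
    exact (mul_eq_zero.1 this).resolve_right hh'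
  -- key vanishing claim
  have key : ∀ u : List F, ∀ n, D < n →
      PowerSeries.coeff n
        ((Q : PowerSeries F) * shiftS u.length (α * wordToSeries u + β)) = 0 := by
    intro u n hn
    rw [coeff_poly_mul_shiftS Q u.length _ (le_trans (le_max_left _ _) (le_of_lt hn))]
    have expand : (Q : PowerSeries F) * (α * wordToSeries u + β) =
        ((h' * p : Polynomial F) : PowerSeries F) * wordToSeries u
          + ((h * p' : Polynomial F) : PowerSeries F) := by
      rw [Polynomial.coe_mul, Polynomial.coe_mul, Polynomial.coe_mul, ← hαrat, ← hβrat]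
      ring
    rw [expand, map_add, coeff_poly_mul_word_eq_zero _ u
      (by
        have h1 : (h' * p).natDegree ≤ h'.natDegree + p.natDegree :=
          Polynomial.natDegree_mul_le
        have h2 : h'.natDegree + p.natDegree ≤ C := le_max_left _ _
        omega),
      Polynomial.coeff_coe, Polynomial.coeff_eq_zero_of_natDegree_lt
      (by
        have h1 : (h * p').natDegree ≤ h.natDegree + p'.natDegree :=
          Polynomial.natDegree_mul_le
        have h2 : h.natDegree + p'.natDegree ≤ C := le_max_right _ _
        omega), add_zero]
  -- the set of possible shifted series is finite
  have hinj : Function.Injective (fun γ : PowerSeries F => (Q : PowerSeries F) * γ) :=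
    mul_right_injective₀ hQ0
  have hT : Set.Finite {γ : PowerSeries F | ∀ n, D < n →
      PowerSeries.coeff n ((Q : PowerSeries F) * γ) = 0} := by
    have := (finite_tailZero F D).preimage
      (Set.injOn_of_injective hinj (s := (fun γ : PowerSeries F =>
        (Q : PowerSeries F) * γ) ⁻¹' {δ : PowerSeries F | ∀ n, D < n →
          PowerSeries.coeff n δ = 0}))
    exact this
  apply Set.Finite.subset (hT.image (fun γ => affWord α γ))
  rintro g ⟨u, rfl⟩
  exact ⟨shiftS u.length (α * wordToSeries u + β), key u, (state_affWord α β u).symm⟩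

/-- Let `F` be a finite field and `α, β ∈ F⟦X⟧` power series expansions of
rational functions (i.e. `h·α` and `h'·β` are polynomials for polynomials `h, h'` with
nonzero constant term), with `α` having nonzero constant term.  Then the tree automorphism
`AffMap (α, β) ∈ Aut(T_F)` is finite-state. -/
theorem affMap_finiteState_of_rational {F : Type*} [Field F] [Fintype F]
    (α β : PowerSeries F) (hα0 : PowerSeries.constantCoeff α ≠ 0)
    (h p h' p' : Polynomial F) (hh : h.eval 0 ≠ 0) (hh' : h'.eval 0 ≠ 0)
    (hαrat : (h : PowerSeries F) * α = (p : PowerSeries F))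
    (hβrat : (h' : PowerSeries F) * β = (p' : PowerSeries F)) :
    FiniteStateFun (affWord α β) :=
  affMap_finiteState_of_rational_aux α β hα0 h p h' p' hh hh' hαrat hβrat

end RoverNekrashevych
end

section
/- Let F be a field and let f ∈ F[X] be a polynomial with f(0) ≠ 0 (so f is a unit of F⟦X⟧). Let R := { β ∈ F⟦X⟧ : ∃ m ∈ ℕ, ∃ p ∈ F[X], f^m · β = p in F⟦X⟧ }, the image in F⟦X⟧ of the localization F[X][1/f]. Then for every β ∈ F⟦X⟧ and every j ∈ ℕ: β ∈ R if and only if shift_j β ∈ R. -/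
namespace RoverNekrashevych

/-- The shift of a power series: `(shift j σ)_i = σ_{i+j}`, so that
`σ = trunc_j σ + X^j · shift j σ`. -/
noncomputable def shift {F : Type*} [CommSemiring F] (j : ℕ) (σ : PowerSeries F) :
    PowerSeries F :=
  PowerSeries.mk fun i => PowerSeries.coeff (i + j) σ

/-- The image of the localization `F[X][1/f]` inside `F⟦X⟧`: the ring of `S`-integers for
`S` the places dividing `f` together with the place at infinity. -/
def Rset {F : Type*} [Field F] (f : Polynomial F) : Set (PowerSeries F) :=
  {β | ∃ (m : ℕ) (p : Polynomial F), (f : PowerSeries F) ^ m * β = (p : PowerSeries F)}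

/-- Let `F` be a field and `f ∈ F[X]` a polynomial with `f(0) ≠ 0`.  Then
for every `β ∈ F⟦X⟧` and every `j : ℕ`, `β` lies in `R = F[X][1/f] ⊆ F⟦X⟧` if and only if
`shift_j β` does. -/
theorem mem_sIntegers_iff_shift_mem {F : Type*} [Field F]
    (f : Polynomial F) (hf : f.eval 0 ≠ 0) (β : PowerSeries F) (j : ℕ) :
    β ∈ Rset f ↔ shift j β ∈ Rset f := by
  have hdecomp : (↑(PowerSeries.trunc j β) : PowerSeries F)
      + PowerSeries.X ^ j * shift j β = β := by
    ext n
    rw [map_add]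
    rcases lt_or_ge n j with h | h
    · rw [PowerSeries.coeff_X_pow_mul' ]
      simp [Polynomial.coeff_coe, PowerSeries.coeff_trunc, h, Nat.not_le_of_lt h]
    · obtain ⟨d, rfl⟩ := Nat.exists_eq_add_of_le h
      rw [add_comm j d, PowerSeries.coeff_X_pow_mul]
      simp [Polynomial.coeff_coe, PowerSeries.coeff_trunc, shift,
        Nat.not_lt_of_ge (by omega : j ≤ d + j)]
  constructor
  · rintro ⟨m, p, hp⟩
    have key : (PowerSeries.X : PowerSeries F) ^ j * ((f : PowerSeries F) ^ m * shift j β)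
        = ((p - f ^ m * PowerSeries.trunc j β : Polynomial F) : PowerSeries F) := by
      have h2 := hp
      rw [← hdecomp] at h2
      push_cast
      linear_combination h2
    have hdvd : (Polynomial.X : Polynomial F) ^ j ∣ (p - f ^ m * PowerSeries.trunc j β) := by
      rw [Polynomial.X_pow_dvd_iff]
      intro d hd
      have := congrArg (PowerSeries.coeff d) key
      rw [PowerSeries.coeff_X_pow_mul' ] at this
      simp only [Nat.not_le_of_lt hd, if_false] at this
      rw [Polynomial.coeff_coe] at this
      exact this.symm
    obtain ⟨r, hr⟩ := hdvd
    refine ⟨m, r, ?_⟩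
    have hXne : (PowerSeries.X : PowerSeries F) ^ j ≠ 0 :=
      pow_ne_zero _ PowerSeries.X_ne_zero
    apply mul_left_cancel₀ hXne
    rw [key, hr]
    push_cast
    ring
  · rintro ⟨m, p, hp⟩
    refine ⟨m, f ^ m * PowerSeries.trunc j β + Polynomial.X ^ j * p, ?_⟩
    nth_rewrite 1 [← hdecomp]
    push_cast
    rw [mul_add]
    rw [show (f : PowerSeries F) ^ m * (PowerSeries.X ^ j * shift j β)
      = PowerSeries.X ^ j * ((f : PowerSeries F) ^ m * shift j β) by ring, hp]

end RoverNekrashevych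
end
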